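/- Let f : (-a,a) × W → ℝ be smooth, where W is an open subset of ℝⁿ. If for each fixed w₀ ∈ W the function s ↦ f(s, w₀) vanishes to order n at s = 0 (i.e., f(s,w₀) = sⁿ g(s) for some smooth g depending on w₀), then there exists a smooth function h on (-a,a) × W with f(s,w) = sⁿ h(s,w) for all (s,w). -/

import Mathlib

open Set MeasureTheory Metric intervalIntegral

section ParamIntegral

variable {E : Type} [NormedAddCommGroup E] [NormedSpace ℝ E] [ProperSpace E]

/-- tube lemma around `Icc 0 1 ×ˢ {p₀}`. -/
lemma exists_tube {U : Set E} (hU : IsOpen U) {O : Set (ℝ × E)} (hO : IsOpen O)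
    (hsub : Icc (0:ℝ) 1 ×ˢ U ⊆ O) {p₀ : E} (hp₀ : p₀ ∈ U) :
    ∃ ε > 0, closedBall p₀ ε ⊆ U ∧ Icc (0:ℝ) 1 ×ˢ closedBall p₀ ε ⊆ O := by
  have hS : IsCompact (Icc (0:ℝ) 1 ×ˢ ({p₀} : Set E)) :=
    isCompact_Icc.prod isCompact_singleton
  have hopen : IsOpen (O ∩ (univ : Set ℝ) ×ˢ U) := hO.inter (isOpen_univ.prod hU)
  have hSO : Icc (0:ℝ) 1 ×ˢ ({p₀} : Set E) ⊆ O ∩ (univ : Set ℝ) ×ˢ U := by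
    rintro ⟨t, p⟩ ⟨ht, hp⟩
    simp only [mem_singleton_iff] at hp
    subst hp
    exact ⟨hsub ⟨ht, hp₀⟩, trivial, hp₀⟩
  obtain ⟨δ, hδ, hthick⟩ := hS.exists_thickening_subset_open hopen hSO
  have hinc : Icc (0:ℝ) 1 ×ˢ closedBall p₀ (δ/2) ⊆ O ∩ (univ : Set ℝ) ×ˢ U := by
    rintro ⟨t, p⟩ ⟨ht, hp⟩
    apply hthick
    rw [Metric.mem_thickening_iff]
    refine ⟨(t, p₀), ⟨ht, rfl⟩, ?_⟩
    rw [Prod.dist_eq]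
    simp only [dist_self]
    have : dist p p₀ ≤ δ/2 := mem_closedBall.1 hp
    calc max (0:ℝ) (dist p p₀) ≤ δ/2 := max_le (by linarith) this
      _ < δ := by linarith
  refine ⟨δ/2, by positivity, ?_, fun q hq => (hinc hq).1⟩
  intro p hp
  have h0 : ((0:ℝ), p) ∈ Icc (0:ℝ) 1 ×ˢ closedBall p₀ (δ/2) :=
    ⟨left_mem_Icc.2 zero_le_one, hp⟩
  exact (hinc h0).2.2

/-- Smoothness of a parametric interval integral of a smooth function. -/
lemma contDiffOn_parametric_intervalIntegral (m : ℕ) :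
    ∀ {F : Type} [NormedAddCommGroup F] [NormedSpace ℝ F] [CompleteSpace F]
      {U : Set E}, IsOpen U → ∀ {O : Set (ℝ × E)}, IsOpen O →
      Icc (0:ℝ) 1 ×ˢ U ⊆ O → ∀ {g : ℝ × E → F}, ContDiffOn ℝ (⊤:ℕ∞) g O →
      ContDiffOn ℝ m (fun p => ∫ t in (0:ℝ)..1, g (t, p)) U := by
  induction m with
  | zero =>
    intro F _ _ _ U hU O hO hsub g hg
    rw [show ((0:ℕ):WithTop ℕ∞) = 0 by norm_cast, contDiffOn_zero]
    intro p₀ hp₀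
    obtain ⟨ε, hε, hballU, hKO⟩ := exists_tube hU hO hsub hp₀
    have hK : IsCompact (Icc (0:ℝ) 1 ×ˢ closedBall p₀ ε) :=
      isCompact_Icc.prod (isCompact_closedBall p₀ ε)
    obtain ⟨C, hC⟩ := hK.exists_bound_of_continuousOn (hg.continuousOn.mono hKO)
    have hmemO : ∀ t ∈ Icc (0:ℝ) 1, ∀ p ∈ closedBall p₀ ε, (t, p) ∈ O :=
      fun t ht p hp => hKO ⟨ht, hp⟩
    have huIoc : (uIoc (0:ℝ) 1) = Ioc (0:ℝ) 1 := uIoc_of_le zero_le_one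
    apply ContinuousAt.continuousWithinAt
    apply intervalIntegral.continuousAt_of_dominated_interval
      (bound := fun _ => C)
    · filter_upwards [Metric.closedBall_mem_nhds p₀ hε] with p hp
      rw [huIoc]
      apply ContinuousOn.aestronglyMeasurable_of_isSeparable _ measurableSet_Ioc
          (TopologicalSpace.IsSeparable.of_separableSpace _)
      apply (hg.continuousOn.comp (Continuous.continuousOn (by fun_prop)) ?_)
      intro t ht
      exact hmemO t (Ioc_subset_Icc_self ht) p hp
    · filter_upwards [Metric.closedBall_mem_nhds p₀ hε] with p hp
      apply Filter.Eventually.of_forall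
      intro t ht
      rw [huIoc] at ht
      exact hC _ ⟨Ioc_subset_Icc_self ht, hp⟩
    · exact intervalIntegrable_const
    · apply Filter.Eventually.of_forall
      intro t ht
      rw [huIoc] at ht
      have : ContinuousAt g (t, p₀) :=
        hg.continuousOn.continuousAt
          (hO.mem_nhds (hmemO t (Ioc_subset_Icc_self ht) p₀ (mem_closedBall_self hε.le)))
      exact this.comp ((continuous_const.prodMk continuous_id).continuousAt)
  | succ m ih =>
    intro F _ _ _ U hU O hO hsub g hg
    set g' : ℝ × E → E →L[ℝ] F :=
      fun q => (fderiv ℝ g q).comp (ContinuousLinearMap.inr ℝ ℝ E) with hg'def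
    have hg' : ContDiffOn ℝ (⊤:ℕ∞) g' O :=
      (hg.fderiv_of_isOpen hO (by simp)).clm_comp contDiffOn_const
    have key : ∀ p₀ ∈ U, HasFDerivAt (fun p => ∫ t in (0:ℝ)..1, g (t, p))
        (∫ t in (0:ℝ)..1, g' (t, p₀)) p₀ := by
      intro p₀ hp₀
      obtain ⟨ε, hε, hballU, hKO⟩ := exists_tube hU hO hsub hp₀
      have hK : IsCompact (Icc (0:ℝ) 1 ×ˢ closedBall p₀ ε) :=
        isCompact_Icc.prod (isCompact_closedBall p₀ ε)
      obtain ⟨C, hC⟩ := hK.exists_bound_of_continuousOn (hg'.continuousOn.mono hKO)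
      have hmemO : ∀ t ∈ Icc (0:ℝ) 1, ∀ p ∈ closedBall p₀ ε, (t, p) ∈ O :=
        fun t ht p hp => hKO ⟨ht, hp⟩
      have huIoc : (uIoc (0:ℝ) 1) = Ioc (0:ℝ) 1 := uIoc_of_le zero_le_one
      have hmeas : ∀ p ∈ closedBall p₀ ε,
          AEStronglyMeasurable (fun t => g (t, p)) (volume.restrict (uIoc (0:ℝ) 1)) := by
        intro p hp
        rw [huIoc]
        apply ContinuousOn.aestronglyMeasurable_of_isSeparable _ measurableSet_Ioc
          (TopologicalSpace.IsSeparable.of_separableSpace _)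
        apply (hg.continuousOn.comp (Continuous.continuousOn (by fun_prop)) ?_)
        intro t ht
        exact hmemO t (Ioc_subset_Icc_self ht) p hp
      apply hasFDerivAt_integral_of_dominated_of_fderiv_le''
        (F' := fun p t => g' (t, p)) (bound := fun _ => C) (ball_mem_nhds p₀ hε)
      · filter_upwards [Metric.closedBall_mem_nhds p₀ hε] with p hp
        exact hmeas p hp
      · apply ContinuousOn.intervalIntegrable
        rw [uIcc_of_le zero_le_one]
        apply (hg.continuousOn.comp (Continuous.continuousOn (by fun_prop)) ?_)
        intro t ht
        exact hmemO t ht p₀ (mem_closedBall_self hε.le)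
      · rw [huIoc]
        apply ContinuousOn.aestronglyMeasurable_of_isSeparable _ measurableSet_Ioc
          (TopologicalSpace.IsSeparable.of_separableSpace _)
        apply (hg'.continuousOn.comp (Continuous.continuousOn (by fun_prop)) ?_)
        intro t ht
        exact hmemO t (Ioc_subset_Icc_self ht) p₀ (mem_closedBall_self hε.le)
      · filter_upwards [ae_restrict_mem measurableSet_uIoc] with t ht
        intro p hp
        rw [huIoc] at ht
        exact hC _ ⟨Ioc_subset_Icc_self ht, ball_subset_closedBall hp⟩
      · exact intervalIntegrable_const
      · filter_upwards [ae_restrict_mem measurableSet_uIoc] with t ht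
        intro p hp
        rw [huIoc] at ht
        have hd : DifferentiableAt ℝ g (t, p) :=
          (hg.differentiableOn (by simp)).differentiableAt
            (hO.mem_nhds (hmemO t (Ioc_subset_Icc_self ht) p (ball_subset_closedBall hp)))
        have hcomp : HasFDerivAt (fun p : E => (t, p))
            (ContinuousLinearMap.inr ℝ ℝ E) p := hasFDerivAt_prodMk_right t p
        exact hd.hasFDerivAt.comp p hcomp
    have hdiff : DifferentiableOn ℝ (fun p => ∫ t in (0:ℝ)..1, g (t, p)) U :=
      fun p hp => ((key p hp).differentiableAt).differentiableWithinAt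
    have hfd : ContDiffOn ℝ m (fderiv ℝ (fun p => ∫ t in (0:ℝ)..1, g (t, p))) U := by
      apply (ih hU hO hsub hg').congr
      intro p hp
      exact (key p hp).fderiv
    have : ((m + 1 : ℕ) : WithTop ℕ∞) = (m : WithTop ℕ∞) + 1 := by push_cast; ring
    rw [this, contDiffOn_succ_iff_fderiv_of_isOpen hU]
    exact ⟨hdiff, fun h => absurd h (by simp), hfd⟩

end ParamIntegral

section PD

variable {d : ℕ}

/-- partial derivative in the first (real) variable. -/
noncomputable def pdAux (g : ℝ × (Fin d → ℝ) → ℝ) : ℝ × (Fin d → ℝ) → ℝ :=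
  fun p => fderiv ℝ g p (1, 0)

lemma pdAux_contDiffOn {V : Set (ℝ × (Fin d → ℝ))} (hV : IsOpen V)
    {g : ℝ × (Fin d → ℝ) → ℝ} (hg : ContDiffOn ℝ (⊤:ℕ∞) g V) :
    ContDiffOn ℝ (⊤:ℕ∞) (pdAux g) V :=
  (hg.fderiv_of_isOpen hV (by simp)).clm_apply contDiffOn_const

lemma pdAux_iterate_contDiffOn {V : Set (ℝ × (Fin d → ℝ))} (hV : IsOpen V)
    {g : ℝ × (Fin d → ℝ) → ℝ} (hg : ContDiffOn ℝ (⊤:ℕ∞) g V) (k : ℕ) :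
    ContDiffOn ℝ (⊤:ℕ∞) (pdAux^[k] g) V := by
  induction k with
  | zero => exact hg
  | succ k ih => rw [Function.iterate_succ_apply']; exact pdAux_contDiffOn hV ih

lemma pdAux_hasDerivAt {V : Set (ℝ × (Fin d → ℝ))} (hV : IsOpen V)
    {g : ℝ × (Fin d → ℝ) → ℝ} (hg : ContDiffOn ℝ (⊤:ℕ∞) g V)
    (c : ℝ) (w : Fin d → ℝ) (t₀ : ℝ) (h : (c * t₀, w) ∈ V) :
    HasDerivAt (fun t => g (c * t, w)) (c * pdAux g (c * t₀, w)) t₀ := by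
  have hd : DifferentiableAt ℝ g (c * t₀, w) :=
    (hg.differentiableOn (by simp)).differentiableAt (hV.mem_nhds h)
  have hγ : HasDerivAt (fun t : ℝ => ((c * t : ℝ), w)) ((c, 0) : ℝ × (Fin d → ℝ)) t₀ := by
    have h1 : HasDerivAt (fun t : ℝ => c * t) c t₀ := by
      simpa using (hasDerivAt_id t₀).const_mul c
    exact h1.prodMk (hasDerivAt_const t₀ w)
  have hcomp := hd.hasFDerivAt.comp_hasDerivAt t₀ hγ
  have heq : fderiv ℝ g (c * t₀, w) ((c, 0) : ℝ × (Fin d → ℝ))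
      = c * pdAux g (c * t₀, w) := by
    have : ((c, 0) : ℝ × (Fin d → ℝ)) = c • ((1:ℝ), (0 : Fin d → ℝ)) := by simp
    rw [this, ContinuousLinearMap.map_smul]
    rfl
  rw [heq] at hcomp
  exact hcomp

lemma pdAux_iterate_eq_iteratedDeriv {a : ℝ} {W : Set (Fin d → ℝ)} (hW : IsOpen W)
    {f : ℝ × (Fin d → ℝ) → ℝ} (hf : ContDiffOn ℝ (⊤:ℕ∞) f (Ioo (-a) a ×ˢ W))
    {w : Fin d → ℝ} (hw : w ∈ W) (k : ℕ) :
    ∀ s ∈ Ioo (-a) a, pdAux^[k] f (s, w) = iteratedDeriv k (fun s => f (s, w)) s := by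
  have hV : IsOpen (Ioo (-a) a ×ˢ W) := isOpen_Ioo.prod hW
  induction k with
  | zero => intro s hs; simp [iteratedDeriv_zero]
  | succ k ih =>
    intro s hs
    rw [Function.iterate_succ_apply', iteratedDeriv_succ]
    have heq : (fun s' => pdAux^[k] f (s', w)) =ᶠ[nhds s]
        iteratedDeriv k (fun s => f (s, w)) := by
      filter_upwards [isOpen_Ioo.mem_nhds hs] with s' hs'
      exact ih s' hs'
    rw [← heq.deriv_eq]
    have hder : HasDerivAt (fun s' => pdAux^[k] f (s', w))
        (pdAux (pdAux^[k] f) (s, w)) s := by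
      have := pdAux_hasDerivAt hV (pdAux_iterate_contDiffOn hV hf k) 1 w s
        (by simpa using ⟨hs, hw⟩)
      simpa using this
    exact (hder.deriv).symm

end PD

open Set

/-- If a smooth function `f` on `(-a,a) × W` vanishes to order `n` in `s` at `s = 0`
for every `w ∈ W`, then `f = sⁿ h` for a smooth function `h` on `(-a,a) × W`. -/
theorem smooth_factor_of_pointwise_vanishing_order
    {d : ℕ} {a : ℝ} (ha : 0 < a) {W : Set (Fin d → ℝ)} (hW : IsOpen W)
    (n : ℕ) (hn : 1 ≤ n)
    (f : ℝ × (Fin d → ℝ) → ℝ)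
    (hf : ContDiffOn ℝ (⊤ : ℕ∞) f (Ioo (-a) a ×ˢ W))
    (hvanish : ∀ w ∈ W, ∀ i < n, iteratedDeriv i (fun s => f (s, w)) 0 = 0) :
    ∃ h : ℝ × (Fin d → ℝ) → ℝ,
      ContDiffOn ℝ (⊤ : ℕ∞) h (Ioo (-a) a ×ˢ W) ∧
      ∀ p ∈ Ioo (-a) a ×ˢ W, f p = p.1 ^ n * h p := by
  have hV : IsOpen (Ioo (-a) a ×ˢ W) := isOpen_Ioo.prod hW
  set c : ℝ := ((n-1).factorial : ℝ) with hc
  set Dn : ℝ × (Fin d → ℝ) → ℝ := pdAux^[n] f with hDndef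
  have hDnsmooth : ContDiffOn ℝ (⊤:ℕ∞) Dn (Ioo (-a) a ×ˢ W) :=
    pdAux_iterate_contDiffOn hV hf n
  refine ⟨fun p => ∫ t in (0:ℝ)..1, ((1-t)^(n-1) / c) * Dn (t * p.1, p.2), ?_, ?_⟩
  · -- smoothness of the parametric integral
    have hψ : ContDiff ℝ (⊤:ℕ∞)
        (fun q : ℝ × (ℝ × (Fin d → ℝ)) => ((q.1 * q.2.1 : ℝ), q.2.2)) :=
      (contDiff_fst.mul (contDiff_fst.comp contDiff_snd)).prodMk
        (contDiff_snd.comp contDiff_snd)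
    set O : Set (ℝ × (ℝ × (Fin d → ℝ))) :=
      (fun q : ℝ × (ℝ × (Fin d → ℝ)) => ((q.1 * q.2.1 : ℝ), q.2.2)) ⁻¹'
        (Ioo (-a) a ×ˢ W) with hOdef
    have hOopen : IsOpen O := hV.preimage hψ.continuous
    have hsub : Icc (0:ℝ) 1 ×ˢ (Ioo (-a) a ×ˢ W) ⊆ O := by
      rintro ⟨t, s, w⟩ ⟨ht, hs, hw⟩
      refine ⟨?_, hw⟩
      rw [mem_Ioo, ← abs_lt]
      calc |t * s| = |t| * |s| := abs_mul t s
        _ ≤ 1 * |s| := by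
            apply mul_le_mul_of_nonneg_right _ (abs_nonneg s)
            rw [abs_le]; exact ⟨by linarith [ht.1], ht.2⟩
        _ < a := by rw [one_mul]; exact abs_lt.2 ⟨hs.1, hs.2⟩
    have hg : ContDiffOn ℝ (⊤:ℕ∞)
        (fun q : ℝ × (ℝ × (Fin d → ℝ)) =>
          ((1-q.1)^(n-1) / c) * Dn ((q.1 * q.2.1 : ℝ), q.2.2)) O := by
      apply ContDiffOn.mul
      · exact (((contDiff_const.sub contDiff_fst).pow _).div_const _).contDiffOn
      · exact hDnsmooth.comp hψ.contDiffOn (fun q hq => hq)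
    apply contDiffOn_infty.2
    intro m
    exact contDiffOn_parametric_intervalIntegral m hV hOopen hsub hg
  · -- the factorization identity
    rintro ⟨s, w⟩ ⟨hs, hw⟩
    have hsa : |s| < a := abs_lt.2 ⟨hs.1, hs.2⟩
    have hmem : ∀ t ∈ Icc (0:ℝ) 1, (t * s, w) ∈ Ioo (-a) a ×ˢ W := by
      intro t ht
      refine ⟨?_, hw⟩
      rw [mem_Ioo, ← abs_lt]
      calc |t * s| = |t| * |s| := abs_mul t s
        _ ≤ 1 * |s| := by
            apply mul_le_mul_of_nonneg_right _ (abs_nonneg s)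
            rw [abs_le]; exact ⟨by linarith [ht.1], ht.2⟩
        _ < a := by rw [one_mul]; exact hsa
    have h0Ioo : (0:ℝ) ∈ Ioo (-a) a := ⟨by linarith, ha⟩
    have h0mem : ((0:ℝ), w) ∈ Ioo (-a) a ×ˢ W := Set.mk_mem_prod h0Ioo hw
    -- continuity/integrability helper
    have hcont : ∀ k : ℕ, ContinuousOn (fun t => pdAux^[k] f (t * s, w)) (Icc (0:ℝ) 1) := by
      intro k
      apply ((pdAux_iterate_contDiffOn hV hf k).continuousOn).comp
        (Continuous.continuousOn (by fun_prop))
      intro t ht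
      exact hmem t ht
    have hPder : ∀ k : ℕ, ∀ t₀ ∈ Icc (0:ℝ) 1,
        HasDerivAt (fun t => pdAux^[k] f (t * s, w))
          (s * pdAux^[k+1] f (t₀ * s, w)) t₀ := by
      intro k t₀ ht₀
      have hmem' : (s * t₀, w) ∈ Ioo (-a) a ×ˢ W := by
        rw [mul_comm]; exact hmem t₀ ht₀
      have := pdAux_hasDerivAt hV (pdAux_iterate_contDiffOn hV hf k) s w t₀ hmem'
      rw [← Function.iterate_succ_apply' pdAux k f] at this
      simpa [mul_comm] using this
    have key : ∀ k, 1 ≤ k → k ≤ n →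
        f (s, w) = ∫ t in (0:ℝ)..1,
          ((1-t)^(k-1) / ((k-1).factorial : ℝ)) * (s^k * pdAux^[k] f (t * s, w)) := by
      intro k hk1
      induction k, hk1 using Nat.le_induction with
      | base =>
        intro _
        have hder : ∀ t ∈ uIcc (0:ℝ) 1,
            HasDerivAt (fun t => f (t * s, w)) (s * pdAux f (t * s, w)) t := by
          intro t ht
          rw [uIcc_of_le zero_le_one] at ht
          simpa using hPder 0 t ht
        have hint : IntervalIntegrable (fun t => s * pdAux f (t * s, w)) volume 0 1 := by
          apply ContinuousOn.intervalIntegrable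
          rw [uIcc_of_le zero_le_one]
          exact continuousOn_const.mul (by simpa using hcont 1)
        have hFTC := intervalIntegral.integral_eq_sub_of_hasDerivAt hder hint
        have h0 : f ((0:ℝ), w) = 0 := by
          have := hvanish w hw 0 (by omega)
          simpa [iteratedDeriv_zero] using this
        rw [show ((1:ℝ) * s) = s by ring, show ((0:ℝ) * s) = 0 by ring, h0,
          sub_zero] at hFTC
        rw [← hFTC]
        exact intervalIntegral.integral_congr (fun t ht => by norm_num) |>.symm
      | succ k hk1 ih =>
        intro hkn
        have ihk := ih (by omega)
        have hk0 : (k:ℝ) ≠ 0 := Nat.cast_ne_zero.2 (by omega)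
        have hfacne : ((k-1).factorial : ℝ) ≠ 0 :=
          Nat.cast_ne_zero.2 (Nat.factorial_ne_zero _)
        have hfacne' : ((k).factorial : ℝ) ≠ 0 :=
          Nat.cast_ne_zero.2 (Nat.factorial_ne_zero _)
        have hfac : ((k).factorial : ℝ) = (k:ℝ) * ((k-1).factorial : ℝ) := by
          exact_mod_cast congrArg (Nat.cast (R := ℝ)) (Nat.mul_factorial_pred (by omega)).symm
        set P : ℝ → ℝ := fun t => pdAux^[k] f (t * s, w) with hP
        set Q : ℝ → ℝ := fun t => pdAux^[k+1] f (t * s, w) with hQ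
        set A : ℝ → ℝ := fun t =>
          ((1-t)^(k-1) / ((k-1).factorial : ℝ)) * (s^k * P t) with hA
        set B : ℝ → ℝ := fun t =>
          ((1-t)^k / ((k).factorial : ℝ)) * (s^(k+1) * Q t) with hB
        have hu : ∀ t₀ ∈ uIcc (0:ℝ) 1,
            HasDerivAt (fun t => -(s^k / ((k).factorial : ℝ)) * ((1-t)^k * P t))
              (A t₀ - B t₀) t₀ := by
          intro t₀ ht₀
          rw [uIcc_of_le zero_le_one] at ht₀
          have h1 : HasDerivAt (fun t : ℝ => (1-t)^k)
              ((k:ℝ) * (1-t₀)^(k-1) * (0-1)) t₀ := by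
            have := (hasDerivAt_pow k ((1:ℝ)-t₀)).comp t₀
              ((hasDerivAt_const t₀ (1:ℝ)).sub (hasDerivAt_id t₀))
            simpa [Function.comp_def] using this
          have hq := h1.mul (hPder k t₀ ht₀)
          have hu0 : HasDerivAt (fun t => -(s^k / ((k).factorial : ℝ)) * ((1-t)^k * P t)) _ t₀ :=
            hq.const_mul (-(s^k / ((k).factorial : ℝ)))
          convert hu0 using 1
          rw [hA, hB, hfac]
          field_simp
          simp only [hP, hQ, Function.iterate_succ_apply]
          ring
        have hAint : IntervalIntegrable A volume 0 1 := by
          apply ContinuousOn.intervalIntegrable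
          rw [uIcc_of_le zero_le_one]
          exact (((continuousOn_const.sub continuousOn_id).pow _).div_const _).mul
            (continuousOn_const.mul (hcont k))
        have hBint : IntervalIntegrable B volume 0 1 := by
          apply ContinuousOn.intervalIntegrable
          rw [uIcc_of_le zero_le_one]
          exact (((continuousOn_const.sub continuousOn_id).pow _).div_const _).mul
            (continuousOn_const.mul (hcont (k+1)))
        have hFTC := intervalIntegral.integral_eq_sub_of_hasDerivAt hu (hAint.sub hBint)
        have hP0 : P 0 = 0 := by
          have := pdAux_iterate_eq_iteratedDeriv hW hf hw k 0 h0Ioo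
          rw [hP]
          simp only [zero_mul]
          rw [this]
          exact hvanish w hw k (by omega)
        have hbd : (fun t => -(s^k / ((k).factorial : ℝ)) * ((1-t)^k * P t)) 1
            - (fun t => -(s^k / ((k).factorial : ℝ)) * ((1-t)^k * P t)) 0 = 0 := by
          simp only [hP0]
          rw [show ((1:ℝ)-1) = 0 by ring, zero_pow (by omega : k ≠ 0)]
          ring
        rw [hbd] at hFTC
        have hsplit : (∫ t in (0:ℝ)..1, A t) - ∫ t in (0:ℝ)..1, B t = 0 := by
          rw [← intervalIntegral.integral_sub hAint hBint]
          exact hFTC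
        have hAB : (∫ t in (0:ℝ)..1, A t) = ∫ t in (0:ℝ)..1, B t := by linarith
        rw [show k + 1 - 1 = k by omega]
        calc f (s, w) = ∫ t in (0:ℝ)..1, A t := ihk
          _ = ∫ t in (0:ℝ)..1, B t := hAB
          _ = _ := rfl
    have hkey := key n hn le_rfl
    simp only
    calc f (s, w)
        = ∫ t in (0:ℝ)..1,
            ((1-t)^(n-1) / ((n-1).factorial : ℝ)) * (s^n * pdAux^[n] f (t * s, w)) := hkey
      _ = ∫ t in (0:ℝ)..1, s^n * (((1-t)^(n-1) / c) * Dn (t * s, w)) :=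
          intervalIntegral.integral_congr (fun t ht => by rw [hc, hDndef]; ring)
      _ = s^n * ∫ t in (0:ℝ)..1, ((1-t)^(n-1) / c) * Dn (t * s, w) :=
          intervalIntegral.integral_const_mul _ _
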